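/- arXiv:2203.16478 — 2 statements merged into one kernel-verified Lean document; each statement's English description precedes it below -/
import Mathlib

section
/- For a symmetric n×n real matrix X, the matrix proj(X) = Σᵢ max(0, sᵢ) vᵢ vᵢᵀ is the unique minimizer of the Frobenius-norm distance ‖X − Y‖_F over all positive semidefinite symmetric matrices Y. -/
open Matrix BigOperators

lemma frob2_eq_trace {n : ℕ} (A : Matrix (Fin n) (Fin n) ℝ) :
    ∑ i, ∑ j, (A i j)^2 = (Aᵀ * A).trace := by
  rw [Matrix.trace]
  simp only [Matrix.diag, Matrix.mul_apply, Matrix.transpose_apply, sq]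
  exact Finset.sum_comm

lemma frob2_conj {n : ℕ} (V A : Matrix (Fin n) (Fin n) ℝ) (h1 : V * Vᵀ = 1) :
    ∑ i, ∑ j, ((Vᵀ * A * V) i j)^2 = ∑ i, ∑ j, (A i j)^2 := by
  rw [frob2_eq_trace, frob2_eq_trace]
  have ht : (Vᵀ * A * V)ᵀ = Vᵀ * Aᵀ * V := by
    simp [Matrix.transpose_mul, Matrix.mul_assoc]
  rw [ht]
  have h2 : Vᵀ * Aᵀ * V * (Vᵀ * A * V) = Vᵀ * (Aᵀ * A) * V := by
    have : V * (Vᵀ * A * V) = A * V := by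
      rw [← Matrix.mul_assoc, ← Matrix.mul_assoc, h1, Matrix.one_mul]
    rw [Matrix.mul_assoc (Vᵀ * Aᵀ), this, Matrix.mul_assoc, Matrix.mul_assoc, Matrix.mul_assoc]
  rw [h2, Matrix.mul_assoc, Matrix.trace_mul_comm, Matrix.mul_assoc, h1, Matrix.mul_one]

lemma conj_diag {n : ℕ} (v : Fin n → Fin n → ℝ) (c : Fin n → ℝ) :
    ∑ i, c i • vecMulVec (v i) (v i) = (Matrix.of v)ᵀ * Matrix.diagonal c * Matrix.of v := by
  have hd : Matrix.diagonal c * Matrix.of v = Matrix.of (fun i j => c i * v i j) := by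
    ext i j; simp [Matrix.diagonal_mul]
  rw [Matrix.mul_assoc, hd]
  ext a b
  simp only [Finset.sum_apply, Matrix.sum_apply, Matrix.smul_apply, Matrix.vecMulVec_apply,
    Matrix.mul_apply, Matrix.transpose_apply, Matrix.of_apply, smul_eq_mul]
  refine Finset.sum_congr rfl fun i _ => by ring

lemma frob2_diagonal {n : ℕ} (d : Fin n → ℝ) :
    ∑ i, ∑ j, ((Matrix.diagonal d) i j)^2 = ∑ i, (d i)^2 := by
  refine Finset.sum_congr rfl fun i _ => ?_
  rw [Finset.sum_eq_single i]
  · simp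
  · intro j _ hj; simp [Matrix.diagonal_apply_ne' _ hj]
  · simp

lemma ptwise_le (a b : ℝ) (hb : 0 ≤ b) : (min a 0)^2 ≤ (a - b)^2 := by
  rcases le_or_gt a 0 with h | h
  · rw [min_eq_left h]; nlinarith
  · rw [min_eq_right h.le]; nlinarith [sq_nonneg (a - b)]

lemma ptwise_eq (a b : ℝ) (hb : 0 ≤ b) (h : (a - b)^2 = (min a 0)^2) : b = max 0 a := by
  rcases le_or_gt a 0 with h' | h'
  · rw [min_eq_left h'] at h
    rw [max_eq_left h']
    nlinarith
  · rw [min_eq_right h'.le] at h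
    rw [max_eq_right h'.le]
    nlinarith

lemma keyG {n : ℕ} (s : Fin n → ℝ) (B : Matrix (Fin n) (Fin n) ℝ) (i j : Fin n) (hB : 0 ≤ B i i) :
    (if i = j then (min (s i) 0)^2 else 0) ≤ ((Matrix.diagonal s - B) i j)^2 := by
  rcases eq_or_ne i j with rfl | hij
  · simpa [Matrix.diagonal_apply_eq] using ptwise_le (s i) (B i i) hB
  · simp [hij]; positivity

lemma key_le {n : ℕ} (s : Fin n → ℝ) (B : Matrix (Fin n) (Fin n) ℝ) (hB : ∀ i, 0 ≤ B i i) :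
    ∑ i, (min (s i) 0)^2 ≤ ∑ i, ∑ j, ((Matrix.diagonal s - B) i j)^2 := by
  have : ∑ i, (min (s i) 0)^2 = ∑ i, ∑ j, (if i = j then (min (s i) 0)^2 else (0:ℝ)) := by
    refine Finset.sum_congr rfl fun i _ => by simp
  rw [this]
  exact Finset.sum_le_sum fun i _ => Finset.sum_le_sum fun j _ => keyG s B i j (hB i)

lemma key_eq {n : ℕ} (s : Fin n → ℝ) (B : Matrix (Fin n) (Fin n) ℝ) (hB : ∀ i, 0 ≤ B i i)
    (h : ∑ i, ∑ j, ((Matrix.diagonal s - B) i j)^2 = ∑ i, (min (s i) 0)^2) :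
    B = Matrix.diagonal (fun i => max 0 (s i)) := by
  have hG : ∑ i, (min (s i) 0)^2 = ∑ i, ∑ j, (if i = j then (min (s i) 0)^2 else (0:ℝ)) := by
    refine Finset.sum_congr rfl fun i _ => by simp
  rw [hG] at h
  have hall : ∀ i ∈ Finset.univ, (∑ j, (if i = j then (min (s i) 0)^2 else (0:ℝ)))
      = ∑ j, ((Matrix.diagonal s - B) i j)^2 := by
    apply (Finset.sum_eq_sum_iff_of_le (fun i _ =>
      Finset.sum_le_sum fun j _ => keyG s B i j (hB i))).mp h.symm
  have hall2 : ∀ i j, (if i = j then (min (s i) 0)^2 else (0:ℝ)) = ((Matrix.diagonal s - B) i j)^2 := by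
    intro i j
    have := (Finset.sum_eq_sum_iff_of_le (fun j _ => keyG s B i j (hB i))).mp (hall i (Finset.mem_univ i))
    exact this j (Finset.mem_univ j)
  ext i j
  rcases eq_or_ne i j with rfl | hij
  · have := hall2 i i
    simp only [if_pos rfl, Matrix.sub_apply, Matrix.diagonal_apply_eq] at this
    rw [Matrix.diagonal_apply_eq]
    exact ptwise_eq (s i) (B i i) (hB i) this.symm
  · have := hall2 i j
    simp only [if_neg hij, Matrix.sub_apply, Matrix.diagonal_apply_ne _ hij] at this
    rw [Matrix.diagonal_apply_ne _ hij]
    nlinarith [this]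

lemma sub_max_eq_min (a : ℝ) : a - max 0 a = min a 0 := by
  rcases le_total a 0 with h | h
  · rw [max_eq_left h, min_eq_left h, sub_zero]
  · rw [max_eq_right h, min_eq_right h, sub_self]

/-- Frobenius norm of a real square matrix. -/
noncomputable def frob {n : ℕ} (A : Matrix (Fin n) (Fin n) ℝ) : ℝ :=
  Real.sqrt (∑ i, ∑ j, (A i j) ^ 2)

/-- the spectral projection proj(X) = Σᵢ max(0,sᵢ) vᵢvᵢᵀ is the unique
minimizer of the Frobenius distance to X over symmetric PSD matrices. -/
theorem stmt_1 {n : ℕ} (X : Matrix (Fin n) (Fin n) ℝ) (hXsym : X.IsSymm)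
    (s : Fin n → ℝ) (v : Fin n → Fin n → ℝ)
    (horth : ∀ i j, v i ⬝ᵥ v j = if i = j then (1 : ℝ) else 0)
    (hdecomp : X = ∑ i, s i • vecMulVec (v i) (v i)) :
    ∀ Y : Matrix (Fin n) (Fin n) ℝ, Y.IsSymm → Y.PosSemidef →
      frob (X - ∑ i, max 0 (s i) • vecMulVec (v i) (v i)) ≤ frob (X - Y) ∧
      (frob (X - Y) = frob (X - ∑ i, max 0 (s i) • vecMulVec (v i) (v i)) →
        Y = ∑ i, max 0 (s i) • vecMulVec (v i) (v i)) := by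
  intro Y hYsym hYpsd
  set V : Matrix (Fin n) (Fin n) ℝ := Matrix.of v with hVdef
  have hVVt : V * Vᵀ = 1 := by
    ext i j
    simpa [Matrix.mul_apply, Matrix.one_apply, dotProduct, hVdef] using horth i j
  have hVtV : Vᵀ * V = 1 := mul_eq_one_comm.mp hVVt
  set B : Matrix (Fin n) (Fin n) ℝ := V * Y * Vᵀ with hBdef
  have hYeq : Y = Vᵀ * B * V := by
    rw [hBdef, ← Matrix.mul_assoc, ← Matrix.mul_assoc, hVtV, Matrix.one_mul,
      Matrix.mul_assoc, hVtV, Matrix.mul_one]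
  have hVH : Vᴴ = Vᵀ := by ext i j; simp
  have hBpsd : B.PosSemidef := by
    rw [hBdef, ← hVH]; exact hYpsd.mul_mul_conjTranspose_same V
  have hBd : ∀ i, 0 ≤ B i i := fun i => hBpsd.diag_nonneg
  have hcd : ∀ c : Fin n → ℝ, (∑ i, c i • vecMulVec (v i) (v i))
      = Vᵀ * Matrix.diagonal c * V := fun c => conj_diag v c
  have hXY : X - Y = Vᵀ * (Matrix.diagonal s - B) * V := by
    rw [hdecomp, hcd, hYeq, Matrix.mul_sub, Matrix.sub_mul]
  have hXP : X - (∑ i, max 0 (s i) • vecMulVec (v i) (v i))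
      = Vᵀ * (Matrix.diagonal (fun i => min (s i) 0)) * V := by
    have hmin : Matrix.diagonal (fun i => min (s i) 0)
        = Matrix.diagonal s - Matrix.diagonal (fun i => max 0 (s i)) := by
      ext i j
      rcases eq_or_ne i j with rfl | hij
      · simp [sub_max_eq_min]
      · simp [Matrix.diagonal_apply_ne _ hij]
    rw [hdecomp, hcd, hcd, hmin, Matrix.mul_sub, Matrix.sub_mul]
  have f1 : ∑ i, ∑ j, ((X - (∑ i, max 0 (s i) • vecMulVec (v i) (v i))) i j)^2
      = ∑ i, (min (s i) 0)^2 := by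
    rw [hXP, frob2_conj _ _ hVVt, frob2_diagonal]
  have f2 : ∑ i, ∑ j, ((X - Y) i j)^2 = ∑ i, ∑ j, ((Matrix.diagonal s - B) i j)^2 := by
    rw [hXY, frob2_conj _ _ hVVt]
  have hle2 := key_le s B hBd
  constructor
  · unfold frob
    apply Real.sqrt_le_sqrt
    rw [f1, f2]
    exact hle2
  · intro heq
    have hn1 : (0:ℝ) ≤ ∑ i, ∑ j, ((X - Y) i j)^2 := by positivity
    have hn2 : (0:ℝ) ≤ ∑ i, ∑ j, ((X - (∑ i, max 0 (s i) • vecMulVec (v i) (v i))) i j)^2 := by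
      positivity
    have h2 : ∑ i, ∑ j, ((X - Y) i j)^2
        = ∑ i, ∑ j, ((X - (∑ i, max 0 (s i) • vecMulVec (v i) (v i))) i j)^2 := by
      unfold frob at heq
      exact (Real.sqrt_inj hn1 hn2).mp heq
    rw [f1, f2] at h2
    have hBeq := key_eq s B hBd h2
    rw [hYeq, hBeq, ← conj_diag]
end

section
/- Suppose (p, d) solve the stationarity condition B p + h + Gᵀ d = 0 of the QP subproblem, where h + Gᵀλ = ∇L(u, λ) is the stacked Lagrangian gradient and p^λ = d − λ. Writing L = B + R, the directional derivative of γ(u, λ) = (1/2)‖∇L(u, λ)‖₂² along (p, p^λ) satisfies ∇_{u,λ}γ · (p, p^λ) = −‖∇L‖₂² + ∇Lᵀ R p. -/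
open Matrix BigOperators

/-- with QP stationarity Bp + h + Gᵀd = 0, ∇L = h + Gᵀλ, p^λ = d - λ and
R = L - B, the directional derivative of γ = (1/2)‖∇L‖² along (p, p^λ), namely
∇Lᵀ(Lp + Gᵀp^λ), equals -‖∇L‖₂² + ∇Lᵀ R p. -/
theorem stmt_9 {m nc : ℕ}
    (L B R : Matrix (Fin m) (Fin m) ℝ) (hR : R = L - B)
    (G : Matrix (Fin nc) (Fin m) ℝ)
    (h : Fin m → ℝ) (lam d : Fin nc → ℝ) (p : Fin m → ℝ)
    (hstat : B *ᵥ p + h + Gᵀ *ᵥ d = 0)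
    (gL : Fin m → ℝ) (hgL : gL = h + Gᵀ *ᵥ lam)
    (plam : Fin nc → ℝ) (hplam : plam = d - lam) :
    gL ⬝ᵥ (L *ᵥ p + Gᵀ *ᵥ plam) = -(gL ⬝ᵥ gL) + gL ⬝ᵥ (R *ᵥ p) := by
  have key : L *ᵥ p + Gᵀ *ᵥ plam = -gL + R *ᵥ p := by
    subst hR hgL hplam
    rw [sub_mulVec, mulVec_sub]
    have := hstat
    funext i
    have h2 := congrFun hstat i
    simp only [Pi.add_apply, Pi.sub_apply, Pi.neg_apply, Pi.zero_apply] at h2 ⊢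
    linarith
  rw [key, dotProduct_add, dotProduct_neg]
end
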